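/- The persistence module G : {0,1,2,3,4}² → vec defined in the context is indecomposable; in fact, its endomorphism ring satisfies End(G) ≅ k. -/

import Mathlib

/-- A pointwise finite dimensional persistence module over a poset `P`, with coefficients in
the field `k`: a functor from `P` to finite dimensional `k`-vector spaces. -/
structure PersMod (k : Type) [Field k] (P : Type) [PartialOrder P] : Type 1 where
  carrier : P → Type
  [addCommGroup : ∀ x, AddCommGroup (carrier x)]
  [module : ∀ x, Module k (carrier x)]
  [fd : ∀ x, FiniteDimensional k (carrier x)]
  map : ∀ {x y : P}, x ≤ y → (carrier x →ₗ[k] carrier y)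
  map_id : ∀ x : P, map (le_refl x) = LinearMap.id
  map_comp : ∀ {x y z : P} (h₁ : x ≤ y) (h₂ : y ≤ z),
      map (h₁.trans h₂) = (map h₂).comp (map h₁)

attribute [instance] PersMod.addCommGroup PersMod.module PersMod.fd

namespace PersMod

section Core

variable {k : Type} [Field k] {P : Type} [PartialOrder P]

/-- A morphism of persistence modules (a natural transformation). -/
structure Hom (M N : PersMod k P) where
  app : ∀ x, M.carrier x →ₗ[k] N.carrier x
  natural : ∀ {x y : P} (h : x ≤ y), (app y).comp (M.map h) = (N.map h).comp (app x)

theorem Hom.ext' {M N : PersMod k P} {f g : Hom M N} (h : ∀ x, f.app x = g.app x) :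
    f = g := by
  cases f; cases g
  have : _ = _ := funext h
  subst this
  rfl

/-- Two persistence modules are isomorphic. -/
def Isom (M N : PersMod k P) : Prop :=
  ∃ (f : Hom M N) (g : Hom N M),
    (∀ x, (g.app x).comp (f.app x) = LinearMap.id) ∧
    (∀ x, (f.app x).comp (g.app x) = LinearMap.id)

/-- The zero persistence module(s). -/
def IsZeroMod (M : PersMod k P) : Prop := ∀ x, Subsingleton (M.carrier x)

/-- The direct sum of two persistence modules. -/
def dsum (M N : PersMod k P) : PersMod k P where
  carrier x := M.carrier x × N.carrier x
  map h := (M.map h).prodMap (N.map h)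
  map_id x := by
    refine LinearMap.ext fun v => ?_
    simp [M.map_id, N.map_id]
  map_comp h₁ h₂ := by
    refine LinearMap.ext fun v => ?_
    simp [M.map_comp h₁ h₂, N.map_comp h₁ h₂]

/-- A persistence module is indecomposable if it is nonzero and in any way of writing it as
a direct sum of two modules, one of the summands is zero. -/
def Indecomposable (M : PersMod k P) : Prop :=
  ¬ IsZeroMod M ∧ ∀ A B : PersMod k P, Isom M (dsum A B) → IsZeroMod A ∨ IsZeroMod B

end Core

section EndRing

variable {k : Type} [Field k] {P : Type} [PartialOrder P] {M : PersMod k P}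

instance : Add (Hom M M) :=
  ⟨fun f g => ⟨fun x => f.app x + g.app x, fun {x y} h => by
    simp [LinearMap.add_comp, LinearMap.comp_add, f.natural h, g.natural h]⟩⟩

instance : Zero (Hom M M) :=
  ⟨⟨fun _ => 0, fun {x y} h => by simp⟩⟩

instance : Neg (Hom M M) :=
  ⟨fun f => ⟨fun x => -f.app x, fun {x y} h => by
    simp [LinearMap.neg_comp, LinearMap.comp_neg, f.natural h]⟩⟩

instance : One (Hom M M) :=
  ⟨⟨fun _ => LinearMap.id, fun {x y} h => by simp⟩⟩

instance : Mul (Hom M M) :=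
  ⟨fun f g => ⟨fun x => (f.app x).comp (g.app x), fun {x y} h => by
    rw [LinearMap.comp_assoc, g.natural h, ← LinearMap.comp_assoc, f.natural h,
      LinearMap.comp_assoc]⟩⟩

/-- The endomorphism ring of a persistence module, with multiplication given by
composition. -/
instance endRing : Ring (Hom M M) where
  add_assoc f g h := Hom.ext' fun x => add_assoc _ _ _
  zero_add f := Hom.ext' fun x => zero_add _
  add_zero f := Hom.ext' fun x => add_zero _
  add_comm f g := Hom.ext' fun x => add_comm _ _
  neg_add_cancel f := Hom.ext' fun x => neg_add_cancel _
  mul_assoc f g h := Hom.ext' fun x => rfl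
  one_mul f := Hom.ext' fun x => rfl
  mul_one f := Hom.ext' fun x => rfl
  left_distrib f g h := Hom.ext' fun x => LinearMap.comp_add _ _ _
  right_distrib f g h := Hom.ext' fun x => LinearMap.add_comp _ _ _
  zero_mul f := Hom.ext' fun x => LinearMap.zero_comp _
  mul_zero f := Hom.ext' fun x => LinearMap.comp_zero _
  nsmul := nsmulRec
  zsmul := zsmulRec

end EndRing

section Subquotient

variable {k : Type} [Field k] {P : Type} [PartialOrder P]

/-- The persistence module with value `V p / W p` at `p`, for monotone families of
submodules `W ≤ V` of an ambient finite-dimensional vector space `E`; all structure maps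
are induced by the identity of `E`. -/
noncomputable def subquotMod {E : Type} [AddCommGroup E] [Module k E] [FiniteDimensional k E]
    (V W : P → Submodule k E) (hV : Monotone V) (hW : Monotone W)
    (hWV : ∀ p, W p ≤ V p) : PersMod k P where
  carrier p := ↥(V p) ⧸ ((W p).comap (V p).subtype)
  map {p q} h := Submodule.mapQ _ _ (Submodule.inclusion (hV h)) (by
    intro x hx
    simp only [Submodule.mem_comap] at hx ⊢
    exact hW h hx)
  map_id p := by
    refine LinearMap.ext fun v => ?_
    obtain ⟨w, rfl⟩ := Submodule.Quotient.mk_surjective _ v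
    rw [Submodule.mapQ_apply]
    have h1 : Submodule.inclusion (hV (le_refl p)) w = w := Subtype.ext rfl
    rw [h1]
    rfl
  map_comp {p q r} h₁ h₂ := by
    refine LinearMap.ext fun v => ?_
    obtain ⟨w, rfl⟩ := Submodule.Quotient.mk_surjective _ v
    simp only [LinearMap.coe_comp, Function.comp_apply, Submodule.mapQ_apply]
    congr 1

lemma iteSub_mono {E : Type} [AddCommGroup E] [Module k E] {c : P → Prop}
    (hc : ∀ {p q : P}, p ≤ q → c p → c q) (A : Submodule k E) :
    Monotone (fun p => @ite _ (c p) (Classical.propDecidable _) A (⊥ : Submodule k E)) := by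
  intro p q h
  dsimp only
  split_ifs with h1 h2
  · exact le_rfl
  · exact absurd (hc h h1) h2
  · exact bot_le
  · exact bot_le

end Subquotient

end PersMod

open PersMod

namespace PersModG

open PersMod

variable (k : Type) [Field k]

/-- The poset `{0,1,2,3,4}²` with the product order. -/
abbrev P55 := Fin 5 × Fin 5

/-- The family of "generated" subspaces of `k²` defining the module `G`:
the generator of `G(1,2)` sits as `(1,0)`, the generator of `G(2,1)` as `(0,1)`, the
generators of `G(0,3)` and `G(3,0)` as `(1,1)`, and from `(0,4)` and `(4,0)` onwards
everything is generated. -/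
noncomputable def GV (p : P55) : Submodule k (k × k) :=
  (@ite _ (((1 : Fin 5), (2 : Fin 5)) ≤ p) (Classical.propDecidable _)
      (Submodule.span k {((1 : k), (0 : k))}) ⊥)
  ⊔ (@ite _ (((2 : Fin 5), (1 : Fin 5)) ≤ p) (Classical.propDecidable _)
      (Submodule.span k {((0 : k), (1 : k))}) ⊥)
  ⊔ (@ite _ (((0 : Fin 5), (3 : Fin 5)) ≤ p ∨ ((3 : Fin 5), (0 : Fin 5)) ≤ p)
      (Classical.propDecidable _) (Submodule.span k {((1 : k), (1 : k))}) ⊥)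
  ⊔ (@ite _ (((0 : Fin 5), (4 : Fin 5)) ≤ p ∨ ((4 : Fin 5), (0 : Fin 5)) ≤ p)
      (Classical.propDecidable _) (⊤ : Submodule k (k × k)) ⊥)

/-- The family of "relation" subspaces of `k²` defining the module `G`: from `(0,4)` and
`(4,0)` onwards, the vector `(1,1)` is killed, which makes the structure maps
`G(0,3) → G(0,4)` and `G(3,0) → G(4,0)` vanish and realizes the maps
`k² → k` as `(1,-1)`. -/
noncomputable def GW (p : P55) : Submodule k (k × k) :=
  @ite _ (((0 : Fin 5), (4 : Fin 5)) ≤ p ∨ ((4 : Fin 5), (0 : Fin 5)) ≤ p)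
    (Classical.propDecidable _) (Submodule.span k {((1 : k), (1 : k))}) ⊥

lemma GV_mono : Monotone (GV k) := by
  intro p q h
  unfold GV
  refine sup_le_sup (sup_le_sup (sup_le_sup ?_ ?_) ?_) ?_
  · exact iteSub_mono (fun h hc => hc.trans h) _ h
  · exact iteSub_mono (fun h hc => hc.trans h) _ h
  · exact iteSub_mono (c := fun p => ((0 : Fin 5), (3 : Fin 5)) ≤ p ∨ ((3 : Fin 5), (0 : Fin 5)) ≤ p)
      (fun h' hc => Or.imp (fun h'' => h''.trans h') (fun h'' => h''.trans h') hc) _ h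
  · exact iteSub_mono (c := fun p => ((0 : Fin 5), (4 : Fin 5)) ≤ p ∨ ((4 : Fin 5), (0 : Fin 5)) ≤ p)
      (fun h' hc => Or.imp (fun h'' => h''.trans h') (fun h'' => h''.trans h') hc) _ h

lemma GW_mono : Monotone (GW k) :=
  iteSub_mono (c := fun p => ((0 : Fin 5), (4 : Fin 5)) ≤ p ∨ ((4 : Fin 5), (0 : Fin 5)) ≤ p)
    (fun h' hc => Or.imp (fun h'' => h''.trans h') (fun h'' => h''.trans h') hc) _

lemma GWV : ∀ p, GW k p ≤ GV k p := by
  intro p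
  unfold GW GV
  split_ifs
  all_goals first
    | exact bot_le
    | exact le_trans le_top le_sup_right

/-- The persistence module `G` on the grid `{0,1,2,3,4}²`. -/
noncomputable def Gmod : PersMod k P55 :=
  subquotMod (GV k) (GW k) (GV_mono k) (GW_mono k) (GWV k)


open PersMod PersModG

variable {k : Type} [Field k]

example : ¬ (((2:Fin 5),(1:Fin 5)) ≤ ((1:Fin 5),(2:Fin 5))) := by decide
example : (((1:Fin 5),(2:Fin 5)) ≤ ((3:Fin 5),(3:Fin 5))) := by decide

noncomputable def mmk (p : P55) (x : k × k) (hx : x ∈ GV k p) : (Gmod k).carrier p :=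
  Submodule.Quotient.mk ⟨x, hx⟩

lemma mmk_map {p q : P55} (h : p ≤ q) (x : k × k) (hx : x ∈ GV k p) :
    (Gmod k).map h (mmk p x hx) = mmk q x (GV_mono k h hx) := rfl

lemma mmk_surj (p : P55) (z : (Gmod k).carrier p) : ∃ x hx, z = mmk (k := k) p x hx := by
  obtain ⟨w, rfl⟩ := Submodule.Quotient.mk_surjective _ z
  exact ⟨w.1, w.2, rfl⟩

lemma mmk_eq (p : P55) (x y : k × k) (hx : x ∈ GV k p) (hy : y ∈ GV k p) :
    mmk p x hx = mmk p y hy ↔ x - y ∈ GW k p := by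
  unfold mmk
  refine (Submodule.Quotient.eq _).trans ?_
  exact Iff.rfl

lemma mmk_smul (p : P55) (c : k) (x : k × k) (hx : x ∈ GV k p) (h2 : c • x ∈ GV k p) :
    mmk p (c • x) h2 = c • mmk p x hx := rfl

lemma mmk_add (p : P55) (x y : k × k) (hx : x ∈ GV k p) (hy : y ∈ GV k p) (h2 : x + y ∈ GV k p) :
    mmk p (x + y) h2 = mmk p x hx + mmk p y hy := rfl
def vE1 (k : Type) [Field k] : k × k := (1,0)
def vE2 (k : Type) [Field k] : k × k := (0,1)
def vVV (k : Type) [Field k] : k × k := (1,1)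

lemma e1_mem {p : P55} (h : ((1:Fin 5),(2:Fin 5)) ≤ p) : vE1 k ∈ GV k p := by
  refine Submodule.mem_sup_left (Submodule.mem_sup_left (Submodule.mem_sup_left ?_))
  rw [if_pos h]; exact Submodule.mem_span_singleton_self _

lemma e2_mem {p : P55} (h : ((2:Fin 5),(1:Fin 5)) ≤ p) : vE2 k ∈ GV k p := by
  refine Submodule.mem_sup_left (Submodule.mem_sup_left (Submodule.mem_sup_right ?_))
  rw [if_pos h]; exact Submodule.mem_span_singleton_self _

lemma vv_mem {p : P55} (h : ((0:Fin 5),(3:Fin 5)) ≤ p ∨ ((3:Fin 5),(0:Fin 5)) ≤ p) :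
    vVV k ∈ GV k p := by
  refine Submodule.mem_sup_left (Submodule.mem_sup_right ?_)
  rw [if_pos h]; exact Submodule.mem_span_singleton_self _

lemma top_mem {p : P55} (h : ((0:Fin 5),(4:Fin 5)) ≤ p ∨ ((4:Fin 5),(0:Fin 5)) ≤ p)
    (x : k × k) : x ∈ GV k p := by
  refine Submodule.mem_sup_right ?_
  rw [if_pos h]; trivial

lemma GW_eq_bot {p : P55} (h : ¬(((0:Fin 5),(4:Fin 5)) ≤ p ∨ ((4:Fin 5),(0:Fin 5)) ≤ p)) :
    GW k p = ⊥ := if_neg h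

lemma GW_eq_span {p : P55} (h : ((0:Fin 5),(4:Fin 5)) ≤ p ∨ ((4:Fin 5),(0:Fin 5)) ≤ p) :
    GW k p = Submodule.span k {vVV k} := if_pos h

lemma GV_le_span {p : P55} (w : k × k)
    (h1 : ((1:Fin 5),(2:Fin 5)) ≤ p → Submodule.span k {vE1 k} ≤ Submodule.span k {w})
    (h2 : ((2:Fin 5),(1:Fin 5)) ≤ p → Submodule.span k {vE2 k} ≤ Submodule.span k {w})
    (h3 : (((0:Fin 5),(3:Fin 5)) ≤ p ∨ ((3:Fin 5),(0:Fin 5)) ≤ p) →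
      Submodule.span k {vVV k} ≤ Submodule.span k {w})
    (h4 : ¬(((0:Fin 5),(4:Fin 5)) ≤ p ∨ ((4:Fin 5),(0:Fin 5)) ≤ p)) :
    GV k p ≤ Submodule.span k {w} := by
  unfold GV
  refine sup_le (sup_le (sup_le ?_ ?_) ?_) ?_
  · split_ifs with h
    · exact h1 h
    · exact bot_le
  · split_ifs with h
    · exact h2 h
    · exact bot_le
  · split_ifs with h
    · exact h3 h
    · exact bot_le
  · rw [if_neg h4]; exact bot_le

lemma GV_12_le : GV k ((1:Fin 5),(2:Fin 5)) ≤ Submodule.span k {vE1 k} := by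
  refine GV_le_span _ ?_ ?_ ?_ ?_
  · exact fun _ => le_rfl
  · exact fun h => absurd h (by decide)
  · exact fun h => absurd h (by decide)
  · decide

lemma GV_21_le : GV k ((2:Fin 5),(1:Fin 5)) ≤ Submodule.span k {vE2 k} := by
  refine GV_le_span _ ?_ ?_ ?_ ?_
  · exact fun h => absurd h (by decide)
  · exact fun _ => le_rfl
  · exact fun h => absurd h (by decide)
  · decide

lemma GV_03_le : GV k ((0:Fin 5),(3:Fin 5)) ≤ Submodule.span k {vVV k} := by
  refine GV_le_span _ ?_ ?_ ?_ ?_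
  · exact fun h => absurd h (by decide)
  · exact fun h => absurd h (by decide)
  · exact fun _ => le_rfl
  · decide

lemma GV_30_le : GV k ((3:Fin 5),(0:Fin 5)) ≤ Submodule.span k {vVV k} := by
  refine GV_le_span _ ?_ ?_ ?_ ?_
  · exact fun h => absurd h (by decide)
  · exact fun h => absurd h (by decide)
  · exact fun _ => le_rfl
  · decide

lemma mmk_congr {p : P55} {x y : k × k} (h : x = y) (hx : x ∈ GV k p) (hy : y ∈ GV k p) :
    mmk p x hx = mmk p y hy := by subst h; rfl

lemma mmk_eq_zero {p : P55} {x : k × k} (hx : x ∈ GV k p) :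
    mmk p x hx = 0 ↔ x ∈ GW k p := by
  unfold mmk
  refine (Submodule.Quotient.mk_eq_zero _).trans ?_
  exact Iff.rfl

lemma mmk_inj {p : P55} (hp : GW k p = ⊥) {x y : k × k} (hx : x ∈ GV k p) (hy : y ∈ GV k p)
    (h : mmk p x hx = mmk p y hy) : x = y := by
  rw [mmk_eq, hp, Submodule.mem_bot, sub_eq_zero] at h
  exact h

lemma transfer (f : Hom (Gmod k) (Gmod k)) {p q : P55} (h : p ≤ q) (x : k × k)
    (hx : x ∈ GV k p) (hxq : x ∈ GV k q) (a : k)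
    (hf : f.app p (mmk p x hx) = a • mmk p x hx) :
    f.app q (mmk q x hxq) = a • mmk q x hxq := by
  have h1 : mmk q x hxq = (Gmod k).map h (mmk p x hx) := rfl
  rw [h1]
  have h2 := LinearMap.congr_fun (f.natural h) (mmk p x hx)
  simp only [LinearMap.coe_comp, Function.comp_apply] at h2
  rw [h2, hf, map_smul]

lemma scalar_at (f : Hom (Gmod k) (Gmod k)) (p : P55) (w : k × k) (hw : w ∈ GV k p)
    (hgen : ∀ y ∈ GV k p, ∃ c : k, y - c • w ∈ GW k p) :
    ∃ a : k, f.app p (mmk p w hw) = a • mmk p w hw := by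
  obtain ⟨y, hy, hE⟩ := mmk_surj p (f.app p (mmk p w hw))
  obtain ⟨c, hc⟩ := hgen y hy
  refine ⟨c, ?_⟩
  rw [hE, ← mmk_smul p c w hw (Submodule.smul_mem _ _ hw), mmk_eq]
  exact hc

lemma gen_span {p : P55} (w : k × k) (hle : GV k p ≤ Submodule.span k {w}) :
    ∀ y ∈ GV k p, ∃ c : k, y - c • w ∈ GW k p := by
  intro y hy
  obtain ⟨c, hc⟩ := Submodule.mem_span_singleton.mp (hle hy)
  exact ⟨c, by rw [← hc, sub_self]; exact zero_mem _⟩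

lemma gen_04 : ∀ y ∈ GV k ((0:Fin 5),(4:Fin 5)), ∃ c : k, y - c • vE1 k ∈ GW k ((0:Fin 5),(4:Fin 5)) := by
  intro y _
  refine ⟨y.1 - y.2, ?_⟩
  rw [GW_eq_span (Or.inl le_rfl)]
  refine Submodule.mem_span_singleton.mpr ⟨y.2, ?_⟩
  simp [vE1, vVV, Prod.ext_iff]

lemma gen_40 : ∀ y ∈ GV k ((4:Fin 5),(0:Fin 5)), ∃ c : k, y - c • vE2 k ∈ GW k ((4:Fin 5),(0:Fin 5)) := by
  intro y _
  refine ⟨y.2 - y.1, ?_⟩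
  rw [GW_eq_span (Or.inr le_rfl)]
  refine Submodule.mem_span_singleton.mpr ⟨y.1, ?_⟩
  simp [vE2, vVV, Prod.ext_iff]
lemma app_smul_of_c4 (f : Hom (Gmod k) (Gmod k)) {p : P55}
    (h : ((0:Fin 5),(4:Fin 5)) ≤ p ∨ ((4:Fin 5),(0:Fin 5)) ≤ p) (b : k)
    (hb : f.app p (mmk p (vE1 k) (top_mem h _)) = b • mmk p (vE1 k) (top_mem h _)) :
    ∀ x (hx : x ∈ GV k p), f.app p (mmk p x hx) = b • mmk p x hx := by
  intro x hx
  have hdec : x = (x.1 - x.2) • vE1 k + x.2 • vVV k := by simp [vE1, vVV, Prod.ext_iff]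
  have hsplit : mmk p x hx = (x.1 - x.2) • mmk p (vE1 k) (top_mem h _)
      + mmk p (x.2 • vVV k) (top_mem h _) := by
    rw [mmk_congr hdec hx (top_mem h _)]; rfl
  have hz : mmk p (x.2 • vVV k) (top_mem h _) = 0 := by
    rw [mmk_eq_zero, GW_eq_span h]
    exact Submodule.smul_mem _ _ (Submodule.mem_span_singleton_self _)
  rw [hsplit, hz, add_zero, map_smul, hb, smul_smul, smul_smul, mul_comm]
lemma exists_smul (f : Hom (Gmod k) (Gmod k)) :
    ∃ a : k, ∀ (p : P55) (x : k × k) (hx : x ∈ GV k p),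
      f.app p (mmk p x hx) = a • mmk p x hx := by
  obtain ⟨a1, ha1⟩ := scalar_at f ((1:Fin 5),(2:Fin 5)) (vE1 k) (e1_mem le_rfl)
    (gen_span _ GV_12_le)
  obtain ⟨a2, ha2⟩ := scalar_at f ((2:Fin 5),(1:Fin 5)) (vE2 k) (e2_mem le_rfl)
    (gen_span _ GV_21_le)
  obtain ⟨a3, ha3⟩ := scalar_at f ((0:Fin 5),(3:Fin 5)) (vVV k) (vv_mem (Or.inl le_rfl))
    (gen_span _ GV_03_le)
  obtain ⟨a4, ha4⟩ := scalar_at f ((3:Fin 5),(0:Fin 5)) (vVV k) (vv_mem (Or.inr le_rfl))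
    (gen_span _ GV_30_le)
  obtain ⟨a5, ha5⟩ := scalar_at f ((0:Fin 5),(4:Fin 5)) (vE1 k) (top_mem (Or.inl le_rfl) _)
    gen_04
  obtain ⟨a6, ha6⟩ := scalar_at f ((4:Fin 5),(0:Fin 5)) (vE2 k) (top_mem (Or.inr le_rfl) _)
    gen_40
  -- relations at (3,3)
  have hE1 : vE1 k ∈ GV k ((3:Fin 5),(3:Fin 5)) := e1_mem (by decide)
  have hE2 : vE2 k ∈ GV k ((3:Fin 5),(3:Fin 5)) := e2_mem (by decide)
  have hV : vVV k ∈ GV k ((3:Fin 5),(3:Fin 5)) := vv_mem (Or.inl (by decide))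
  have t1 := transfer f (by decide : ((1:Fin 5),(2:Fin 5)) ≤ ((3:Fin 5),(3:Fin 5)))
    (vE1 k) (e1_mem le_rfl) hE1 a1 ha1
  have t2 := transfer f (by decide : ((2:Fin 5),(1:Fin 5)) ≤ ((3:Fin 5),(3:Fin 5)))
    (vE2 k) (e2_mem le_rfl) hE2 a2 ha2
  have t3 := transfer f (by decide : ((0:Fin 5),(3:Fin 5)) ≤ ((3:Fin 5),(3:Fin 5)))
    (vVV k) (vv_mem (Or.inl le_rfl)) hV a3 ha3
  have t4 := transfer f (by decide : ((3:Fin 5),(0:Fin 5)) ≤ ((3:Fin 5),(3:Fin 5)))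
    (vVV k) (vv_mem (Or.inr le_rfl)) hV a4 ha4
  have hW33 : GW k ((3:Fin 5),(3:Fin 5)) = ⊥ := GW_eq_bot (by decide)
  have hVsplit : mmk ((3:Fin 5),(3:Fin 5)) (vVV k) hV
      = mmk _ (vE1 k) hE1 + mmk _ (vE2 k) hE2 := by
    rw [mmk_congr (show vVV k = vE1 k + vE2 k by simp [vE1, vE2, vVV, Prod.ext_iff])
      hV (Submodule.add_mem _ hE1 hE2)]
    rfl
  rw [hVsplit, map_add, t1, t2] at t3
  have h12 : a1 • vE1 k + a2 • vE2 k = a3 • vE1 k + a3 • vE2 k := by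
    refine mmk_inj hW33
      (Submodule.add_mem _ (Submodule.smul_mem _ _ hE1) (Submodule.smul_mem _ _ hE2))
      (Submodule.add_mem _ (Submodule.smul_mem _ _ hE1) (Submodule.smul_mem _ _ hE2)) ?_
    show a1 • mmk _ (vE1 k) hE1 + a2 • mmk _ (vE2 k) hE2
      = a3 • mmk _ (vE1 k) hE1 + a3 • mmk _ (vE2 k) hE2
    rw [t3, smul_add]
  have hc12 : a1 = a3 ∧ a2 = a3 := by
    have := h12
    simp [vE1, vE2, Prod.ext_iff] at this
    exact this
  have t4' : f.app _ (mmk ((3:Fin 5),(3:Fin 5)) (vVV k) hV) = a4 • mmk _ (vVV k) hV := t4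
  rw [hVsplit, map_add, t1, t2] at t4'
  have h34 : a1 • vE1 k + a2 • vE2 k = a4 • vE1 k + a4 • vE2 k := by
    refine mmk_inj hW33
      (Submodule.add_mem _ (Submodule.smul_mem _ _ hE1) (Submodule.smul_mem _ _ hE2))
      (Submodule.add_mem _ (Submodule.smul_mem _ _ hE1) (Submodule.smul_mem _ _ hE2)) ?_
    show a1 • mmk _ (vE1 k) hE1 + a2 • mmk _ (vE2 k) hE2
      = a4 • mmk _ (vE1 k) hE1 + a4 • mmk _ (vE2 k) hE2
    rw [t4', smul_add]
  have hc34 : a1 = a4 := by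
    have := h34
    simp [vE1, vE2, Prod.ext_iff] at this
    exact this.1
  -- relation at (1,4) : a1 = a5
  have hE114 : vE1 k ∈ GV k ((1:Fin 5),(4:Fin 5)) := e1_mem (by decide)
  have u1 := transfer f (by decide : ((1:Fin 5),(2:Fin 5)) ≤ ((1:Fin 5),(4:Fin 5)))
    (vE1 k) (e1_mem le_rfl) hE114 a1 ha1
  have u5 := transfer f (by decide : ((0:Fin 5),(4:Fin 5)) ≤ ((1:Fin 5),(4:Fin 5)))
    (vE1 k) (top_mem (Or.inl le_rfl) _) hE114 a5 ha5
  have h15 : a1 • vE1 k - a5 • vE1 k ∈ GW k ((1:Fin 5),(4:Fin 5)) := by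
    rw [← mmk_eq _ _ _ (Submodule.smul_mem _ _ hE114) (Submodule.smul_mem _ _ hE114)]
    show (a1 : k) • mmk _ (vE1 k) hE114 = a5 • mmk _ (vE1 k) hE114
    rw [← u1, ← u5]
  have hc15 : a1 = a5 := by
    rw [GW_eq_span (Or.inl (by decide))] at h15
    obtain ⟨c, hc⟩ := Submodule.mem_span_singleton.mp h15
    simp [vE1, vVV, Prod.ext_iff] at hc
    obtain ⟨h1, h2⟩ := hc
    rw [h2] at h1
    linear_combination -h1
  -- relation at (4,1) : a2 = a6
  have hE241 : vE2 k ∈ GV k ((4:Fin 5),(1:Fin 5)) := e2_mem (by decide)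
  have w2 := transfer f (by decide : ((2:Fin 5),(1:Fin 5)) ≤ ((4:Fin 5),(1:Fin 5)))
    (vE2 k) (e2_mem le_rfl) hE241 a2 ha2
  have w6 := transfer f (by decide : ((4:Fin 5),(0:Fin 5)) ≤ ((4:Fin 5),(1:Fin 5)))
    (vE2 k) (top_mem (Or.inr le_rfl) _) hE241 a6 ha6
  have h26 : a2 • vE2 k - a6 • vE2 k ∈ GW k ((4:Fin 5),(1:Fin 5)) := by
    rw [← mmk_eq _ _ _ (Submodule.smul_mem _ _ hE241) (Submodule.smul_mem _ _ hE241)]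
    show (a2 : k) • mmk _ (vE2 k) hE241 = a6 • mmk _ (vE2 k) hE241
    rw [← w2, ← w6]
  have hc26 : a2 = a6 := by
    rw [GW_eq_span (Or.inr (by decide))] at h26
    obtain ⟨c, hc⟩ := Submodule.mem_span_singleton.mp h26
    simp [vE2, vVV, Prod.ext_iff] at hc
    obtain ⟨h1, h2⟩ := hc
    rw [h1] at h2
    linear_combination -h2
  -- uniform scalar
  have ha2' : f.app _ (mmk ((2:Fin 5),(1:Fin 5)) (vE2 k) (e2_mem le_rfl))
      = a1 • mmk _ (vE2 k) (e2_mem le_rfl) := by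
    rw [ha2, hc12.2, ← hc12.1]
  have ha3' : f.app _ (mmk ((0:Fin 5),(3:Fin 5)) (vVV k) (vv_mem (Or.inl le_rfl)))
      = a1 • mmk _ (vVV k) (vv_mem (Or.inl le_rfl)) := by
    rw [ha3, ← hc12.1]
  have ha4' : f.app _ (mmk ((3:Fin 5),(0:Fin 5)) (vVV k) (vv_mem (Or.inr le_rfl)))
      = a1 • mmk _ (vVV k) (vv_mem (Or.inr le_rfl)) := by
    rw [ha4, ← hc34]
  have ha5' : f.app _ (mmk ((0:Fin 5),(4:Fin 5)) (vE1 k) (top_mem (Or.inl le_rfl) _))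
      = a1 • mmk _ (vE1 k) (top_mem (Or.inl le_rfl) _) := by
    rw [ha5, ← hc15]
  have ha6' : f.app _ (mmk ((4:Fin 5),(0:Fin 5)) (vE2 k) (top_mem (Or.inr le_rfl) _))
      = a1 • mmk _ (vE2 k) (top_mem (Or.inr le_rfl) _) := by
    rw [ha6, ← hc26, hc12.2, ← hc12.1]
  refine ⟨a1, ?_⟩
  intro p x hx
  have hx' := hx
  unfold GV at hx'
  obtain ⟨u, hu, x4, hx4, hsum4⟩ := Submodule.mem_sup.mp hx'
  obtain ⟨u2, hu2, x3, hx3, hsum3⟩ := Submodule.mem_sup.mp hu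
  obtain ⟨x1, hx1, x2, hx2, hsum2⟩ := Submodule.mem_sup.mp hu2
  subst hsum2; subst hsum3
  have hxeq : x = x1 + x2 + x3 + x4 := hsum4.symm
  have m1 : x1 ∈ GV k p := by
    unfold GV; exact Submodule.mem_sup_left (Submodule.mem_sup_left (Submodule.mem_sup_left hx1))
  have m2 : x2 ∈ GV k p := by
    unfold GV; exact Submodule.mem_sup_left (Submodule.mem_sup_left (Submodule.mem_sup_right hx2))
  have m3 : x3 ∈ GV k p := by
    unfold GV; exact Submodule.mem_sup_left (Submodule.mem_sup_right hx3)
  have m4 : x4 ∈ GV k p := by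
    unfold GV; exact Submodule.mem_sup_right hx4
  have hsplit : mmk p x hx = ((mmk p x1 m1 + mmk p x2 m2) + mmk p x3 m3) + mmk p x4 m4 := by
    rw [mmk_congr hxeq hx (by rw [← hxeq]; exact hx)]
    rfl
  have case1 : f.app p (mmk p x1 m1) = a1 • mmk p x1 m1 := by
    by_cases hc : ((1:Fin 5),(2:Fin 5)) ≤ p
    · rw [if_pos hc] at hx1
      obtain ⟨c, rfl⟩ := Submodule.mem_span_singleton.mp hx1
      show f.app p (c • mmk p (vE1 k) (e1_mem hc)) = a1 • (c • mmk p (vE1 k) (e1_mem hc))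
      rw [map_smul, transfer f hc (vE1 k) (e1_mem le_rfl) (e1_mem hc) a1 ha1,
        smul_smul, smul_smul, mul_comm]
    · rw [if_neg hc, Submodule.mem_bot] at hx1
      subst hx1
      show f.app p 0 = a1 • (0 : (Gmod k).carrier p)
      rw [map_zero, smul_zero]
  have case2 : f.app p (mmk p x2 m2) = a1 • mmk p x2 m2 := by
    by_cases hc : ((2:Fin 5),(1:Fin 5)) ≤ p
    · rw [if_pos hc] at hx2
      obtain ⟨c, rfl⟩ := Submodule.mem_span_singleton.mp hx2
      show f.app p (c • mmk p (vE2 k) (e2_mem hc)) = a1 • (c • mmk p (vE2 k) (e2_mem hc))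
      rw [map_smul, transfer f hc (vE2 k) (e2_mem le_rfl) (e2_mem hc) a1 ha2',
        smul_smul, smul_smul, mul_comm]
    · rw [if_neg hc, Submodule.mem_bot] at hx2
      subst hx2
      show f.app p 0 = a1 • (0 : (Gmod k).carrier p)
      rw [map_zero, smul_zero]
  have case3 : f.app p (mmk p x3 m3) = a1 • mmk p x3 m3 := by
    by_cases hc : ((0:Fin 5),(3:Fin 5)) ≤ p ∨ ((3:Fin 5),(0:Fin 5)) ≤ p
    · rw [if_pos hc] at hx3
      obtain ⟨c, rfl⟩ := Submodule.mem_span_singleton.mp hx3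
      show f.app p (c • mmk p (vVV k) (vv_mem hc)) = a1 • (c • mmk p (vVV k) (vv_mem hc))
      have htr : f.app p (mmk p (vVV k) (vv_mem hc)) = a1 • mmk p (vVV k) (vv_mem hc) := by
        rcases hc with h03 | h30
        · exact transfer f h03 (vVV k) (vv_mem (Or.inl le_rfl)) (vv_mem (Or.inl h03)) a1 ha3'
        · exact transfer f h30 (vVV k) (vv_mem (Or.inr le_rfl)) (vv_mem (Or.inr h30)) a1 ha4'
      rw [map_smul, htr, smul_smul, smul_smul, mul_comm]
    · rw [if_neg hc, Submodule.mem_bot] at hx3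
      subst hx3
      show f.app p 0 = a1 • (0 : (Gmod k).carrier p)
      rw [map_zero, smul_zero]
  have case4 : f.app p (mmk p x4 m4) = a1 • mmk p x4 m4 := by
    by_cases hc : ((0:Fin 5),(4:Fin 5)) ≤ p ∨ ((4:Fin 5),(0:Fin 5)) ≤ p
    · refine app_smul_of_c4 f hc a1 ?_ x4 m4
      rcases hc with h04 | h40
      · exact transfer f h04 (vE1 k) (top_mem (Or.inl le_rfl) _) (top_mem (Or.inl h04) _)
          a1 ha5'
      · have hneg : mmk ((4:Fin 5),(0:Fin 5)) (vE1 k) (top_mem (Or.inr le_rfl) _)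
            = - mmk _ (vE2 k) (top_mem (Or.inr le_rfl) _) := by
          show _ = mmk ((4:Fin 5),(0:Fin 5)) (-vE2 k)
            (Submodule.neg_mem _ (top_mem (Or.inr le_rfl) _))
          rw [mmk_eq, GW_eq_span (Or.inr le_rfl)]
          refine Submodule.mem_span_singleton.mpr ⟨1, ?_⟩
          simp [vE1, vE2, vVV, Prod.ext_iff]
        have h40f : f.app _ (mmk ((4:Fin 5),(0:Fin 5)) (vE1 k) (top_mem (Or.inr le_rfl) _))
            = a1 • mmk _ (vE1 k) (top_mem (Or.inr le_rfl) _) := by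
          rw [hneg, map_neg, ha6', smul_neg]
        exact transfer f h40 (vE1 k) (top_mem (Or.inr le_rfl) _) (top_mem (Or.inr h40) _)
          a1 h40f
    · rw [if_neg hc, Submodule.mem_bot] at hx4
      subst hx4
      show f.app p 0 = a1 • (0 : (Gmod k).carrier p)
      rw [map_zero, smul_zero]
  rw [hsplit, map_add, map_add, map_add, case1, case2, case3, case4,
    smul_add, smul_add, smul_add]
lemma mmk_ne_zero : mmk ((2:Fin 5),(2:Fin 5)) (vE1 k) (e1_mem (by decide)) ≠ (0 : (Gmod k).carrier ((2:Fin 5),(2:Fin 5))) := by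
  rw [Ne, mmk_eq_zero, GW_eq_bot (by decide), Submodule.mem_bot]
  intro h
  exact one_ne_zero (congrArg Prod.fst h)

lemma scalar_unique {a b : k}
    (h : a • mmk ((2:Fin 5),(2:Fin 5)) (vE1 k) (e1_mem (by decide))
       = b • mmk ((2:Fin 5),(2:Fin 5)) (vE1 k) (e1_mem (by decide))) : a = b := by
  have h2 : a • vE1 k = b • vE1 k := by
    refine mmk_inj (p := ((2:Fin 5),(2:Fin 5))) (GW_eq_bot (by decide))
      (Submodule.smul_mem _ _ (e1_mem (by decide)))
      (Submodule.smul_mem _ _ (e1_mem (by decide))) ?_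
    exact h
  simpa [vE1, Prod.ext_iff] using h2

/-- The scalar endomorphism. -/
noncomputable def hsmul (a : k) : Hom (Gmod k) (Gmod k) where
  app _ := a • LinearMap.id
  natural {x y} h := by
    refine LinearMap.ext fun z => ?_
    simp

lemma app_ext {f g : Hom (Gmod k) (Gmod k)}
    (h : ∀ p x hx, f.app p (mmk p x hx) = g.app p (mmk p x hx)) : f = g := by
  refine Hom.ext' fun p => LinearMap.ext fun z => ?_
  obtain ⟨x, hx, rfl⟩ := mmk_surj p z
  exact h p x hx

noncomputable def scal (f : Hom (Gmod k) (Gmod k)) : k := Classical.choose (exists_smul f)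

lemma scal_spec (f : Hom (Gmod k) (Gmod k)) :
    ∀ (p : P55) (x : k × k) (hx : x ∈ GV k p),
      f.app p (mmk p x hx) = scal f • mmk p x hx := Classical.choose_spec (exists_smul f)

lemma eq_hsmul_scal (f : Hom (Gmod k) (Gmod k)) : f = hsmul (scal f) :=
  app_ext fun p x hx => scal_spec f p x hx

lemma scal_eq (f : Hom (Gmod k) (Gmod k)) (a : k)
    (h : ∀ (p : P55) (x : k × k) (hx : x ∈ GV k p),
      f.app p (mmk p x hx) = a • mmk p x hx) : scal f = a :=
  scalar_unique ((scal_spec f _ _ _).symm.trans (h ((2:Fin 5),(2:Fin 5)) (vE1 k) (e1_mem (by decide))))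

noncomputable def endEquiv : Hom (Gmod k) (Gmod k) ≃+* k where
  toFun := scal
  invFun := hsmul
  left_inv f := (eq_hsmul_scal f).symm
  right_inv a := scal_eq (hsmul a) a (fun _ _ _ => rfl)
  map_mul' f g := by
    refine scal_eq _ _ fun p x hx => ?_
    show f.app p (g.app p (mmk p x hx)) = (scal f * scal g) • mmk p x hx
    rw [scal_spec g, map_smul, scal_spec f, smul_smul, mul_comm]
  map_add' f g := by
    refine scal_eq _ _ fun p x hx => ?_
    show f.app p (mmk p x hx) + g.app p (mmk p x hx) = (scal f + scal g) • mmk p x hx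
    rw [scal_spec f, scal_spec g, add_smul]
/-- Composition of persistence module morphisms. -/
def hcomp {P' : Type} [PartialOrder P'] {M N L : PersMod k P'}
    (f : Hom N L) (g : Hom M N) : Hom M L where
  app x := (f.app x).comp (g.app x)
  natural {x y} h := by
    rw [LinearMap.comp_assoc, g.natural h, ← LinearMap.comp_assoc, f.natural h,
      LinearMap.comp_assoc]

/-- The projection onto the first summand, as an endomorphism of the direct sum. -/
def projHom (A B : PersMod k P55) : Hom (dsum A B) (dsum A B) where
  app _ := LinearMap.prodMap LinearMap.id 0
  natural {x y} h := by
    refine LinearMap.ext fun z => ?_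
    refine Prod.ext rfl ?_
    show (0 : B.carrier y) = (B.map h) 0
    exact (map_zero _).symm

lemma app_eq_scal_smul (f : Hom (Gmod k) (Gmod k)) (p : P55) (z : (Gmod k).carrier p) :
    f.app p z = scal f • z := by
  obtain ⟨x, hx, rfl⟩ := mmk_surj p z
  exact scal_spec f p x hx

theorem Gmod_not_zero : ¬ IsZeroMod (Gmod k) := by
  intro h
  have := h ((2:Fin 5),(2:Fin 5))
  exact mmk_ne_zero (k := k) (Subsingleton.elim _ _)

theorem Gmod_indec : (Gmod k).Indecomposable := by
  refine ⟨Gmod_not_zero, ?_⟩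
  rintro A B ⟨F, G', h1, h2⟩
  set e : Hom (Gmod k) (Gmod k) := hcomp G' (hcomp (projHom A B) F) with he
  have heapp : ∀ (x : P55) (z : (Gmod k).carrier x),
      e.app x z = G'.app x ((LinearMap.prodMap LinearMap.id 0) (F.app x z)) := fun _ _ => rfl
  have hFG : ∀ (x : P55) w, F.app x (G'.app x w) = w :=
    fun x w => LinearMap.congr_fun (h2 x) w
  have hee : e * e = e := by
    refine Hom.ext' fun x => LinearMap.ext fun z => ?_
    show e.app x (e.app x z) = e.app x z
    simp only [heapp]
    erw [hFG]
    rfl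
  have hmul : scal (e * e) = scal e * scal e := by
    refine scal_eq _ _ fun p x hx => ?_
    show e.app p (e.app p (mmk p x hx)) = (scal e * scal e) • mmk p x hx
    rw [scal_spec e, map_smul, scal_spec e, smul_smul]
  have hss : scal e * scal e = scal e := by
    rw [← hmul, hee]
  have hs01 : scal e = 0 ∨ scal e = 1 := by
    have hfac : scal e * (scal e - 1) = 0 := by ring_nf; linear_combination hss
    rcases mul_eq_zero.mp hfac with h | h
    · exact Or.inl h
    · exact Or.inr (by linear_combination h)
  rcases hs01 with hs | hs
  · left
    intro x
    have hz : ∀ a : A.carrier x, a = 0 := by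
      intro a
      have hz1 : e.app x (G'.app x (a, 0)) = G'.app x (a, 0) := by
        rw [heapp]; erw [hFG]
        rfl
      have hz2 : e.app x (G'.app x (a, 0)) = 0 := by
        rw [app_eq_scal_smul, hs, zero_smul]
      have hz3 : G'.app x (a, 0) = 0 := hz1.symm.trans hz2
      have hz4 : ((a, 0) : A.carrier x × B.carrier x) = 0 := by
        rw [← hFG x (a, 0), hz3, map_zero]; rfl
      exact congrArg Prod.fst hz4
    exact ⟨fun a b => by rw [hz a, hz b]⟩
  · right
    intro x
    have hz : ∀ b : B.carrier x, b = 0 := by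
      intro b
      have hz1 : e.app x (G'.app x (0, b)) = 0 := by
        rw [heapp]; erw [hFG]
        show G'.app x (0, 0) = 0
        exact map_zero _
      have hz2 : e.app x (G'.app x (0, b)) = G'.app x (0, b) := by
        rw [app_eq_scal_smul, hs, one_smul]
      have hz3 : G'.app x (0, b) = 0 := hz2.symm.trans hz1
      have hz4 : ((0, b) : A.carrier x × B.carrier x) = 0 := by
        rw [← hFG x (0, b), hz3, map_zero]; rfl
      exact congrArg Prod.snd hz4
    exact ⟨fun a b => by rw [hz a, hz b]⟩
end PersModG

open PersMod

/-- The persistence module `G` on `{0,1,2,3,4}²` is indecomposable; in fact its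
endomorphism ring is isomorphic to `k`. -/
theorem Gmod_indecomposable (k : Type) [Field k] :
    (PersModG.Gmod k).Indecomposable ∧
    Nonempty (Hom (PersModG.Gmod k) (PersModG.Gmod k) ≃+* k) := by
  exact ⟨PersModG.Gmod_indec, ⟨PersModG.endEquiv⟩⟩
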